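/- Let f : X → Y be a continuous open surjection onto a first-countable space Y such that f⁻¹(F) is r-pseudocompact in X for every r-pseudocompact set F in Y. Then X is pointwise pseudocompact. -/

import Mathlib

open Filter Topology

/-- A subset `A` of `Z` is r-pseudocompact in `Z` if every infinite family of open
sets of `Z`, each meeting `A`, has an accumulation point in `A` (i.e. a point of `A`
each of whose neighborhoods meets infinitely many members of the family). -/
def RPseudocompactIn {Z : Type*} [TopologicalSpace Z] (A : Set Z) : Prop :=
  ∀ 𝒢 : Set (Set Z), 𝒢.Infinite → (∀ V ∈ 𝒢, IsOpen V) → (∀ V ∈ 𝒢, (V ∩ A).Nonempty) →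
    ∃ x ∈ A, ∀ W ∈ 𝓝 x, {V ∈ 𝒢 | (W ∩ V).Nonempty}.Infinite

/-- if `f : X → Y` is a continuous open surjection onto a
first-countable space such that preimages of r-pseudocompact sets are
r-pseudocompact, then `X` is pointwise pseudocompact. -/
theorem stmt_19 {X Y : Type*} [TopologicalSpace X] [TopologicalSpace Y]
    (f : X → Y) (hf : Continuous f) (hopen : IsOpenMap f)
    (hsurj : Function.Surjective f) [FirstCountableTopology Y]
    (hr : ∀ F : Set Y, RPseudocompactIn F → RPseudocompactIn (f ⁻¹' F)) :
    ∀ x : X, ∃ U : ℕ → Set X, (∀ n, IsOpen (U n) ∧ x ∈ U n) ∧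
      ∀ V : ℕ → Set X, (∀ n, IsOpen (V n) ∧ (V n).Nonempty ∧ V n ⊆ U n) →
        ∃ p : X, ∀ W ∈ 𝓝 p, {n : ℕ | (W ∩ V n).Nonempty}.Infinite := by
  intro x
  set y : Y := f x with hy
  obtain ⟨B, hB⟩ := (𝓝 y).exists_antitone_basis
  refine ⟨fun n => f ⁻¹' interior (B n), fun n =>
    ⟨isOpen_interior.preimage hf, mem_interior_iff_mem_nhds.2 (hB.1.mem_of_mem trivial)⟩, ?_⟩
  intro V hV
  by_cases hfin : (Set.range V).Finite
  · -- some set repeats infinitely often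
    have : ∃ V₀ ∈ Set.range V, {n | V n = V₀}.Infinite := by
      by_contra hc
      push_neg at hc
      have huniv : (Set.univ : Set ℕ) ⊆ ⋃ V₀ ∈ Set.range V, {n | V n = V₀} := by
        intro n _
        exact Set.mem_biUnion ⟨n, rfl⟩ rfl
      exact Set.infinite_univ (Set.Finite.subset
        (Set.Finite.biUnion hfin fun V₀ hV₀ => (hc V₀ hV₀)) huniv)
    obtain ⟨V₀, ⟨m, hm⟩, hinf⟩ := this
    obtain ⟨p, hp⟩ : V₀.Nonempty := hm ▸ (hV m).2.1
    refine ⟨p, fun W hW => hinf.mono fun n hn => ?_⟩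
    exact ⟨p, mem_of_mem_nhds hW, hn ▸ hp⟩
  · -- main case
    choose xp hx using fun n => (hV n).2.1
    set ys : ℕ → Y := fun n => f (xp n) with hys
    have hysB : ∀ n, ys n ∈ interior (B n) := fun n => (hV n).2.2 (hx n)
    set F : Set Y := insert y (Set.range ys) with hFdef
    have hF : RPseudocompactIn F := by
      intro 𝒢 hinf hop hmeet
      by_cases hcase : ∃ p ∈ F, {V' ∈ 𝒢 | p ∈ V'}.Infinite
      · obtain ⟨p, hpF, hpinf⟩ := hcase
        exact ⟨p, hpF, fun W hW => hpinf.mono fun V' hVm =>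
          ⟨hVm.1, p, mem_of_mem_nhds hW, hVm.2⟩⟩
      · push_neg at hcase
        refine ⟨y, Set.mem_insert _ _, fun W hW => ?_⟩
        obtain ⟨N, -, hN⟩ := hB.1.mem_iff.1 hW
        by_contra hWfin
        rw [Set.not_infinite] at hWfin
        have hsub : 𝒢 ⊆ {V' ∈ 𝒢 | (W ∩ V').Nonempty} ∪
            ⋃ n ∈ Finset.range N, {V' ∈ 𝒢 | ys n ∈ V'} := by
          intro V' hVg
          obtain ⟨q, hqV, hqF⟩ := hmeet V' hVg
          rcases hqF with hq | ⟨n, hq⟩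
          · exact Or.inl ⟨hVg, q, hq ▸ mem_of_mem_nhds hW, hqV⟩
          · by_cases hn : N ≤ n
            · exact Or.inl ⟨hVg, ys n, hN (hB.2 hn (interior_subset (hysB n))), hq.symm ▸ hqV⟩
            · exact Or.inr (Set.mem_biUnion (Finset.mem_range.2 (lt_of_not_ge hn))
                ⟨hVg, hq.symm ▸ hqV⟩)
        refine hinf (Set.Finite.subset (hWfin.union ?_) hsub)
        exact Set.Finite.biUnion (Finset.range N).finite_toSet fun n _ =>
          (hcase (ys n) (Set.mem_insert_of_mem _ ⟨n, rfl⟩))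
    have hA := hr F hF
    obtain ⟨p, hpA, hp⟩ := hA (Set.range V) hfin
      (by rintro V' ⟨n, rfl⟩; exact (hV n).1)
      (by rintro V' ⟨n, rfl⟩
          exact ⟨xp n, hx n, Set.mem_preimage.2 (Set.mem_insert_of_mem _ ⟨n, rfl⟩)⟩)
    refine ⟨p, fun W hW => ?_⟩
    have h1 := hp W hW
    have hsub : {V' ∈ Set.range V | (W ∩ V').Nonempty} ⊆
        V '' {n | (W ∩ V n).Nonempty} := by
      rintro V' ⟨⟨n, rfl⟩, hne⟩
      exact ⟨n, hne, rfl⟩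
    exact Set.Infinite.of_image _ (h1.mono hsub)
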